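/- Let K ≥ 1 and N ≥ 1 be integers, let r be a real number with 1 ≤ r ≤ K, write r₁ = ⌊r⌋ and r₂ = ⌈r⌉, and let α ∈ [0,1] satisfy r = α·r₁ + (1−α)·r₂. Let a_1, …, a_K be nonnegative real numbers satisfying ∑_{j=1}^K a_j = N and ∑_{j=1}^K j·a_j = r·N. Then ∑_{j=1}^K (a_j/N)·(K−j)/(K·j) ≥ α·(K−r₁)/(K·r₁) + (1−α)·(K−r₂)/(K·r₂). In other words, the quantity ∑_{j=1}^K (a_j/N)·(K−j)/(K·j) is bounded below by the lower convex envelope of the points {(j, (K−j)/(Kj)) : j = 1,…,K} evaluated at r. -/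

import Mathlib

/-- Let `K ≥ 1`, `N ≥ 1`, let `r` be real with `1 ≤ r ≤ K`, write
`r₁ = ⌊r⌋`, `r₂ = ⌈r⌉`, and let `α ∈ [0,1]` satisfy `r = α r₁ + (1 - α) r₂`.
If `a 1, …, a K` are nonnegative reals with `∑ a j = N` and `∑ j * a j = r * N`, then
`∑ (a j / N) * (K - j)/(K * j) ≥ α (K - r₁)/(K r₁) + (1 - α)(K - r₂)/(K r₂)`,
i.e. the sum is bounded below by the lower convex envelope of the points
`(j, (K - j)/(K j))`, `j = 1, …, K`, evaluated at `r`. -/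
theorem cdc_converse_noninteger_envelope
    (K N : ℕ) (hK : 1 ≤ K) (hN : 1 ≤ N)
    (r : ℝ) (hr1 : 1 ≤ r) (hrK : r ≤ K)
    (α : ℝ) (hα0 : 0 ≤ α) (hα1 : α ≤ 1)
    (hconv : r = α * (⌊r⌋ : ℝ) + (1 - α) * (⌈r⌉ : ℝ))
    (a : ℕ → ℝ) (ha : ∀ j ∈ Finset.Icc 1 K, 0 ≤ a j)
    (hsum : ∑ j ∈ Finset.Icc 1 K, a j = N)
    (hrsum : ∑ j ∈ Finset.Icc 1 K, (j : ℝ) * a j = r * N) :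
    ∑ j ∈ Finset.Icc 1 K, (a j / N) * (((K : ℝ) - j) / (K * j)) ≥
      α * (((K : ℝ) - (⌊r⌋ : ℝ)) / (K * (⌊r⌋ : ℝ))) +
        (1 - α) * (((K : ℝ) - (⌈r⌉ : ℝ)) / (K * (⌈r⌉ : ℝ))) := by
  set c : ℝ := (⌊r⌋ : ℝ) with hc
  set d : ℝ := (⌈r⌉ : ℝ) with hd
  have hNpos : (0:ℝ) < N := by exact_mod_cast Nat.lt_of_lt_of_le Nat.zero_lt_one hN
  have hKpos : (0:ℝ) < K := by exact_mod_cast Nat.lt_of_lt_of_le Nat.zero_lt_one hK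
  have hcint : (1:ℤ) ≤ ⌊r⌋ := by
    rw [Int.le_floor]; exact_mod_cast hr1
  have hc1 : (1:ℝ) ≤ c := by rw [hc]; exact_mod_cast hcint
  have hcd : c ≤ d := by rw [hc, hd]; exact_mod_cast Int.floor_le_ceil r
  have hd1 : (1:ℝ) ≤ d := le_trans hc1 hcd
  have hc0 : (0:ℝ) < c := lt_of_lt_of_le one_pos hc1
  have hd0 : (0:ℝ) < d := lt_of_lt_of_le one_pos hd1
  set p : ℝ := 1/c + 1/d - 1/K with hp
  set q : ℝ := -(1/(c*d)) with hq
  -- pointwise lower bound by the line p + q * j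
  have hpoint : ∀ j ∈ Finset.Icc 1 K,
      p + q * (j:ℝ) ≤ ((K : ℝ) - j) / (K * j) := by
    intro j hj
    rw [Finset.mem_Icc] at hj
    have hjpos : (0:ℝ) < j := by exact_mod_cast Nat.lt_of_lt_of_le Nat.zero_lt_one hj.1
    have hkey : (0:ℝ) ≤ ((j:ℝ) - c) * ((j:ℝ) - d) := by
      rcases le_or_gt (j:ℤ) ⌊r⌋ with h | h
      · have h1 : (j:ℝ) ≤ c := by rw [hc]; exact_mod_cast h
        have h2 : (j:ℝ) ≤ d := le_trans h1 hcd
        nlinarith [mul_nonneg (sub_nonneg.2 h1) (sub_nonneg.2 h2)]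
      · have h2 : ⌈r⌉ ≤ (j:ℤ) := le_trans (Int.ceil_le_floor_add_one r) h
        have h2' : d ≤ (j:ℝ) := by rw [hd]; exact_mod_cast h2
        have h1 : c ≤ (j:ℝ) := le_trans hcd h2'
        exact mul_nonneg (by linarith) (by linarith)
    have expand : ((K : ℝ) - j) / (K * j) - (p + q * (j:ℝ))
        = ((j:ℝ) - c) * ((j:ℝ) - d) / (c * d * j) := by
      rw [hp, hq]
      field_simp
      ring
    have hdiv : (0:ℝ) ≤ ((j:ℝ) - c) * ((j:ℝ) - d) / (c * d * j) :=
      div_nonneg hkey (by positivity)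
    linarith [expand ▸ hdiv]
  -- sum bound
  have hstep : ∑ j ∈ Finset.Icc 1 K, (a j / N) * (p + q * (j:ℝ))
      ≤ ∑ j ∈ Finset.Icc 1 K, (a j / N) * (((K : ℝ) - j) / (K * j)) := by
    apply Finset.sum_le_sum
    intro j hj
    exact mul_le_mul_of_nonneg_left (hpoint j hj) (div_nonneg (ha j hj) hNpos.le)
  -- compute the left sum
  have hcomp : ∑ j ∈ Finset.Icc 1 K, (a j / N) * (p + q * (j:ℝ)) = p + q * r := by
    have : ∑ j ∈ Finset.Icc 1 K, (a j / N) * (p + q * (j:ℝ))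
        = (p * ∑ j ∈ Finset.Icc 1 K, a j
            + q * ∑ j ∈ Finset.Icc 1 K, (j:ℝ) * a j) / N := by
      rw [Finset.mul_sum, Finset.mul_sum, ← Finset.sum_add_distrib, Finset.sum_div]
      apply Finset.sum_congr rfl
      intro j hj
      ring
    rw [this, hsum, hrsum]
    field_simp
  -- the RHS equals p + q * r
  have hrhs : α * (((K : ℝ) - c) / (K * c)) + (1 - α) * (((K : ℝ) - d) / (K * d))
      = p + q * r := by
    rw [hp, hq, hconv]
    field_simp
    ring
  rw [ge_iff_le, hrhs, ← hcomp]
  exact hstep
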